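/- Let Γ be a free group with countable basis {γ_i : i ∈ ℕ} and G a finite group. Let μ be the Borel probability measure on Hom(Γ, G) determined by μ(Cyl(e_1,…,e_k; σ_1,…,σ_k)) = 1/|G|^k for all cylinder sets. Then for every automorphism φ of Γ, the map h ↦ h ∘ φ^{-1} on Hom(Γ, G) preserves μ. -/

import Mathlib

open MeasureTheory

/-- The σ-algebra on `Hom(FreeGroup ℕ, G)` generated by pointwise evaluation,
with `G` carrying the discrete σ-algebra. -/
noncomputable instance homMS (G : Type) [Group G] :
    MeasurableSpace (FreeGroup ℕ →* G) :=
  MeasurableSpace.comap (fun f => (f : FreeGroup ℕ → G))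
    (@MeasurableSpace.pi (FreeGroup ℕ) (fun _ => G) (fun _ => ⊤))

open FreeGroup

namespace SchreierDev

abbrev F := FreeGroup ℕ

variable (Q : Subgroup F)

/-- Right-coset setoid: `u ~ v ↔ u * v⁻¹ ∈ Q`. -/
def rcs : Setoid F :=
  ⟨fun u v => u * v⁻¹ ∈ Q, by
    constructor
    · intro x; simpa using Q.one_mem
    · intro x y h; simpa using Q.inv_mem h
    · intro x y z h₁ h₂
      have := Q.mul_mem h₁ h₂
      have e : x * y⁻¹ * (y * z⁻¹) = x * z⁻¹ := by group
      rwa [e] at this⟩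

/-- Right cosets of `Q`. -/
def C := Quotient (rcs Q)

/-- Class of an element. -/
def cmk (u : F) : C Q := Quotient.mk (rcs Q) u

lemma cmk_eq_cmk {u v : F} : cmk Q u = cmk Q v ↔ u * v⁻¹ ∈ Q := by
  constructor
  · intro h; exact Quotient.exact h
  · intro h; exact Quotient.sound h

def base : C Q := cmk Q 1

lemma cmk_surj (c : C Q) : ∃ u, cmk Q u = c := by
  obtain ⟨u, hu⟩ := Quotient.exists_rep c
  exact ⟨u, hu⟩

/-- Right multiplication by a single letter on right cosets. -/
def act (c : C Q) (ℓ : ℕ × Bool) : C Q :=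
  Quotient.map' (· * FreeGroup.mk [ℓ]) (by
    intro a b h
    show (a * FreeGroup.mk [ℓ]) * (b * FreeGroup.mk [ℓ])⁻¹ ∈ Q
    have : (a * FreeGroup.mk [ℓ]) * (b * FreeGroup.mk [ℓ])⁻¹ = a * b⁻¹ := by group
    rw [this]; exact h) c

lemma act_cmk (u : F) (ℓ : ℕ × Bool) : act Q (cmk Q u) ℓ = cmk Q (u * FreeGroup.mk [ℓ]) := rfl

lemma mk_single_tt (b : ℕ) : FreeGroup.mk [(b, true)] = of b := rfl

lemma mk_single_ff (b : ℕ) : FreeGroup.mk [(b, false)] = (of b)⁻¹ := by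
  rw [← mk_single_tt, inv_mk]; rfl

lemma act_act_ff (c : C Q) (b : ℕ) : act Q (act Q c (b, true)) (b, false) = c := by
  obtain ⟨u, rfl⟩ := cmk_surj Q c
  rw [act_cmk, act_cmk, cmk_eq_cmk]
  rw [mk_single_tt, mk_single_ff]
  simpa using Q.one_mem

lemma act_act_tt (c : C Q) (b : ℕ) : act Q (act Q c (b, false)) (b, true) = c := by
  obtain ⟨u, rfl⟩ := cmk_surj Q c
  rw [act_cmk, act_cmk, cmk_eq_cmk]
  rw [mk_single_tt, mk_single_ff]
  simpa using Q.one_mem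

lemma foldl_act_cmk (u : F) (L : List (ℕ × Bool)) :
    List.foldl (act Q) (cmk Q u) L = cmk Q (u * FreeGroup.mk L) := by
  induction L generalizing u with
  | nil => simp [FreeGroup.one_eq_mk.symm]
  | cons ℓ L ih =>
      rw [List.foldl_cons, act_cmk, ih, mul_assoc, mul_mk]
      rfl

lemma foldl_act_foldl_act_invRev (c : C Q) (L : List (ℕ × Bool)) :
    List.foldl (act Q) (List.foldl (act Q) c L) (invRev L) = c := by
  obtain ⟨u, rfl⟩ := cmk_surj Q c
  rw [foldl_act_cmk, foldl_act_cmk, mul_assoc, mul_mk]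
  have : FreeGroup.mk (L ++ invRev L) = 1 := by
    rw [← mul_mk, ← inv_mk, mul_inv_cancel]
  rw [this, mul_one]


variable {G : Type} [Group G]

/-- Traversal ("holonomy") of a word along the Schreier coset structure,
with edge labels `x`. -/
def trav (x : C Q × ℕ → G) : C Q → List (ℕ × Bool) → G
  | _, [] => 1
  | c, (b, true) :: L => x (c, b) * trav x (act Q c (b, true)) L
  | c, (b, false) :: L => (x (act Q c (b, false), b))⁻¹ * trav x (act Q c (b, false)) L

variable {Q}

lemma trav_nil (x : C Q × ℕ → G) (c : C Q) : trav Q x c [] = 1 := rfl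

lemma trav_cons_tt (x : C Q × ℕ → G) (c : C Q) (b : ℕ) (L : List (ℕ × Bool)) :
    trav Q x c ((b, true) :: L) = x (c, b) * trav Q x (act Q c (b, true)) L := rfl

lemma trav_cons_ff (x : C Q × ℕ → G) (c : C Q) (b : ℕ) (L : List (ℕ × Bool)) :
    trav Q x c ((b, false) :: L)
      = (x (act Q c (b, false), b))⁻¹ * trav Q x (act Q c (b, false)) L := rfl

lemma trav_append (x : C Q × ℕ → G) (c : C Q) (L₁ L₂ : List (ℕ × Bool)) :
    trav Q x c (L₁ ++ L₂) = trav Q x c L₁ * trav Q x (List.foldl (act Q) c L₁) L₂ := by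
  induction L₁ generalizing c with
  | nil => simp [trav_nil]
  | cons ℓ L ih =>
      obtain ⟨b, d⟩ := ℓ
      cases d
      · rw [List.cons_append, trav_cons_ff, trav_cons_ff, ih, List.foldl_cons, mul_assoc]
      · rw [List.cons_append, trav_cons_tt, trav_cons_tt, ih, List.foldl_cons, mul_assoc]

lemma trav_invRev (x : C Q × ℕ → G) (c : C Q) (L : List (ℕ × Bool)) :
    trav Q x (List.foldl (act Q) c L) (invRev L) = (trav Q x c L)⁻¹ := by
  induction L generalizing c with
  | nil => simp [trav_nil, invRev]
  | cons ℓ L ih =>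
      obtain ⟨b, d⟩ := ℓ
      have hinv : invRev ((b, d) :: L) = invRev L ++ [(b, !d)] := by
        simp [invRev]
      rw [hinv, List.foldl_cons, trav_append, ih, foldl_act_foldl_act_invRev]
      cases d
      · rw [trav_cons_ff]
        have h1 : trav Q x (act Q c (b,false)) [(b, !false)]
            = x (act Q c (b,false), b) * trav Q x (act Q (act Q c (b,false)) (b,true)) [] :=
          rfl
        rw [h1, trav_nil, mul_one, mul_inv_rev, inv_inv]
      · rw [trav_cons_tt]
        have h1 : trav Q x (act Q c (b,true)) [(b, !true)]
            = (x (act Q (act Q c (b,true)) (b,false), b))⁻¹ *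
              trav Q x (act Q (act Q c (b,true)) (b,false)) [] :=
          rfl
        rw [h1, trav_nil, mul_one, act_act_ff, mul_inv_rev]

lemma trav_step (x : C Q × ℕ → G) (c : C Q) {L₁ L₂ : List (ℕ × Bool)}
    (h : Red.Step L₁ L₂) : trav Q x c L₁ = trav Q x c L₂ := by
  cases h with
  | @not L₁ L₂ b d =>
      rw [trav_append, trav_append]
      congr 1
      set c' := List.foldl (act Q) c L₁
      cases d
      · rw [trav_cons_ff]
        show (x (act Q c' (b, false), b))⁻¹ *
            trav Q x (act Q c' (b,false)) ((b, true) :: L₂) = _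
        rw [trav_cons_tt, act_act_tt, ← mul_assoc, inv_mul_cancel, one_mul]
      · rw [trav_cons_tt]
        show x (c', b) * trav Q x (act Q c' (b,true)) ((b, false) :: L₂) = _
        rw [trav_cons_ff, act_act_ff, ← mul_assoc, mul_inv_cancel, one_mul]

lemma trav_red (x : C Q × ℕ → G) (c : C Q) {L₁ L₂ : List (ℕ × Bool)}
    (h : Red L₁ L₂) : trav Q x c L₁ = trav Q x c L₂ := by
  induction h with
  | refl => rfl
  | tail _ h ih => rw [ih, trav_step x c h]

lemma trav_eq_of_mk_eq (x : C Q × ℕ → G) (c : C Q) {L₁ L₂ : List (ℕ × Bool)}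
    (h : FreeGroup.mk L₁ = FreeGroup.mk L₂) : trav Q x c L₁ = trav Q x c L₂ := by
  have h1 : Red L₁ (reduce L₁) := reduce.red
  have h2 : Red L₂ (reduce L₂) := reduce.red
  rw [trav_red x c h1, trav_red x c h2, reduce.sound h]

/-- The holonomy of a group element, starting from the base coset. -/
def kap (x : C Q × ℕ → G) (w : F) : G := trav Q x (base Q) w.toWord

lemma trav_toWord_eq_kap (x : C Q × ℕ → G) (w : F) {L : List (ℕ × Bool)}
    (h : FreeGroup.mk L = w) : trav Q x (base Q) L = kap x w := by
  have : FreeGroup.mk L = FreeGroup.mk w.toWord := by rw [h, mk_toWord]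
  exact trav_eq_of_mk_eq x _ this

lemma foldl_act_base (L : List (ℕ × Bool)) :
    List.foldl (act Q) (base Q) L = cmk Q (FreeGroup.mk L) := by
  rw [base, foldl_act_cmk, one_mul]

lemma kap_mul (x : C Q × ℕ → G) (u w : F) :
    kap x (u * w) = kap x u * trav Q x (cmk Q u) w.toWord := by
  have h : FreeGroup.mk (u.toWord ++ w.toWord) = u * w := by
    rw [← mul_mk, mk_toWord, mk_toWord]
  rw [← trav_toWord_eq_kap x _ h, trav_append, foldl_act_base, mk_toWord]
  rfl

lemma kap_one (x : C Q × ℕ → G) : kap x (1 : F) = 1 := by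
  rw [kap, toWord_one, trav_nil]

lemma cmk_eq_base_iff {u : F} : cmk Q u = base Q ↔ u ∈ Q := by
  rw [base, cmk_eq_cmk, inv_one, mul_one]

lemma kap_mul_of_mem (x : C Q × ℕ → G) {u : F} (hu : u ∈ Q) (w : F) :
    kap x (u * w) = kap x u * kap x w := by
  rw [kap_mul]
  congr 2
  exact (cmk_eq_base_iff.mpr hu)

lemma kap_inv_of_mem (x : C Q × ℕ → G) {u : F} (hu : u ∈ Q) :
    kap x u⁻¹ = (kap x u)⁻¹ := by
  have h := kap_mul_of_mem x hu u⁻¹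
  rw [mul_inv_cancel, kap_one] at h
  exact (inv_eq_of_mul_eq_one_right h.symm).symm


variable (Q) in
/-- The minimal word length in a right coset. -/
noncomputable def dist (c : C Q) : ℕ :=
  sInf {n | ∃ w : F, cmk Q w = c ∧ w.toWord.length = n}

lemma dist_set_nonempty (c : C Q) :
    {n | ∃ w : F, cmk Q w = c ∧ w.toWord.length = n}.Nonempty := by
  obtain ⟨u, hu⟩ := cmk_surj Q c
  exact ⟨u.toWord.length, u, hu, rfl⟩

lemma dist_spec (c : C Q) : ∃ w : F, cmk Q w = c ∧ w.toWord.length = dist Q c :=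
  Nat.sInf_mem (dist_set_nonempty c)

lemma dist_le {c : C Q} {w : F} (h : cmk Q w = c) : dist Q c ≤ w.toWord.length :=
  Nat.sInf_le ⟨w, h, rfl⟩

lemma dist_base : dist Q (base Q) = 0 :=
  Nat.le_zero.mp (by simpa [toWord_one] using dist_le (Q := Q) (c := base Q) (w := 1) rfl)

lemma eq_base_of_dist_eq_zero {c : C Q} (h : dist Q c = 0) : c = base Q := by
  obtain ⟨w, hw, hlen⟩ := dist_spec c
  rw [h] at hlen
  have : w = 1 := toWord_eq_nil_iff.mp (List.length_eq_zero_iff.mp hlen)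
  rw [this] at hw
  exact hw.symm

lemma decomp_exists (c : C Q) (h : c ≠ base Q) :
    ∃ p : C Q × (ℕ × Bool), dist Q p.1 < dist Q c ∧ act Q p.1 p.2 = c := by
  obtain ⟨w, hw, hlen⟩ := dist_spec c
  have hd0 : dist Q c ≠ 0 := fun h0 => h (eq_base_of_dist_eq_zero h0)
  have hL : w.toWord ≠ [] := by
    intro hnil
    rw [hnil] at hlen
    exact hd0 (by simpa using hlen.symm)
  set L := w.toWord with hLdef
  refine ⟨⟨cmk Q (FreeGroup.mk L.dropLast), L.getLast hL⟩, ?_, ?_⟩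
  · show dist Q (cmk Q (FreeGroup.mk L.dropLast)) < dist Q c
    have h1 : dist Q (cmk Q (FreeGroup.mk L.dropLast))
        ≤ (FreeGroup.mk L.dropLast).toWord.length := dist_le rfl
    have h2 : (FreeGroup.mk L.dropLast).toWord.length ≤ L.dropLast.length := by
      rw [toWord_mk]
      exact Red.length_le reduce.red
    have h3 : L.dropLast.length < L.length := by
      have := @List.length_dropLast _ L
      have hpos : 0 < L.length := List.length_pos_iff.mpr hL
      omega
    omega
  · show act Q (cmk Q (FreeGroup.mk L.dropLast)) (L.getLast hL) = c
    rw [act_cmk, mul_mk, List.dropLast_append_getLast hL, hLdef, mk_toWord, hw]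

variable (Q) in
/-- A Schreier transversal: a preferred representative of each coset, built
by minimal-length recursion (so that it is automatically "prefix-closed"). -/
noncomputable def rep (c : C Q) : F :=
  letI := Classical.dec (c = base Q)
  if h : c = base Q then 1
  else
    rep (Classical.choose (decomp_exists c h)).1 *
      FreeGroup.mk [(Classical.choose (decomp_exists c h)).2]
termination_by dist Q c
decreasing_by exact (Classical.choose_spec (decomp_exists c h)).1

lemma rep_base : rep Q (base Q) = 1 := by
  rw [rep, dif_pos rfl]

lemma rep_decomp (c : C Q) (h : c ≠ base Q) :
    rep Q c = rep Q (Classical.choose (decomp_exists c h)).1 *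
      FreeGroup.mk [(Classical.choose (decomp_exists c h)).2] := by
  conv_lhs => rw [rep]
  rw [dif_neg h]

variable (Q) in
/-- The Schreier generator attached to an "edge" `(c, b)`. -/
noncomputable def yel (p : C Q × ℕ) : F :=
  rep Q p.1 * of p.2 * (rep Q (act Q p.1 (p.2, true)))⁻¹


lemma rep_cmk (c : C Q) : cmk Q (rep Q c) = c := by
  by_cases h : c = base Q
  · rw [h, rep_base]; rfl
  · have hs := Classical.choose_spec (decomp_exists c h)
    have ih := rep_cmk (Classical.choose (decomp_exists c h)).1
    rw [rep_decomp c h, ← act_cmk, ih]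
    exact hs.2
termination_by dist Q c
decreasing_by exact hs.1

lemma rep_trav {G : Type} [Group G] (x : C Q × ℕ → G)
    (hx : ∀ p, yel Q p = 1 → x p = 1) (c : C Q) :
    trav Q x (base Q) (rep Q c).toWord = 1 := by
  by_cases h : c = base Q
  · rw [h, rep_base, toWord_one, trav_nil]
  · have hs := Classical.choose_spec (decomp_exists c h)
    have ih := rep_trav x hx (Classical.choose (decomp_exists c h)).1
    set c' := (Classical.choose (decomp_exists c h)).1 with hc'
    have hrec : rep Q c = rep Q c' * FreeGroup.mk [(Classical.choose (decomp_exists c h)).2] :=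
      rep_decomp c h
    rcases h2 : (Classical.choose (decomp_exists c h)).2 with ⟨b, d⟩
    rw [h2] at hrec
    have hact : act Q c' (b, d) = c := by rw [← h2]; exact hs.2
    have hmk : FreeGroup.mk ((rep Q c').toWord ++ [(b, d)]) = FreeGroup.mk (rep Q c).toWord := by
      rw [← mul_mk, mk_toWord, mk_toWord, hrec]
    rw [← trav_eq_of_mk_eq x _ hmk, trav_append, ih, one_mul, foldl_act_base, mk_toWord,
      rep_cmk]
    cases d
    · rw [trav_cons_ff, trav_nil, mul_one]
      have hy : yel Q (act Q c' (b, false), b) = 1 := by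
        rw [yel]
        have h3 : act Q (act Q c' (b, false)) (b, true) = c' := act_act_tt Q c' b
        rw [h3]
        have h4 : rep Q (act Q c' (b, false)) = rep Q c' * FreeGroup.mk [(b, false)] := by
          rw [hact, hrec]
        rw [h4, mk_single_ff]
        group
      rw [hx _ hy, inv_one]
    · rw [trav_cons_tt, trav_nil, mul_one]
      have hy : yel Q (c', b) = 1 := by
        rw [yel]
        have h3 : rep Q (act Q c' (b, true)) = rep Q c' * FreeGroup.mk [(b, true)] := by
          rw [hact, hrec]
        rw [h3, mk_single_tt]
        group
      exact hx _ hy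
termination_by dist Q c
decreasing_by exact hs.1

variable (Q) in
/-- The subgroup generated by the Schreier generators. -/
noncomputable def Ysub : Subgroup F := Subgroup.closure (Set.range (yel Q))

lemma yel_mem_Q (p : C Q × ℕ) : yel Q p ∈ Q := by
  obtain ⟨c, b⟩ := p
  have h1 : cmk Q (rep Q c * of b) = act Q c (b, true) := by
    rw [← mk_single_tt, ← act_cmk, rep_cmk]
  have h2 : cmk Q (rep Q c * of b) = cmk Q (rep Q (act Q c (b, true))) := by
    rw [h1, rep_cmk]
  have h3 := (cmk_eq_cmk (Q := Q)).mp h2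
  have h4 : yel Q (c, b) = rep Q c * of b * (rep Q (act Q c (b, true)))⁻¹ := rfl
  rw [h4]
  exact h3

lemma mul_rep_inv_mem_Ysub (w : F) : w * (rep Q (cmk Q w))⁻¹ ∈ Ysub Q := by
  have main : ∀ L : List (ℕ × Bool),
      FreeGroup.mk L * (rep Q (cmk Q (FreeGroup.mk L)))⁻¹ ∈ Ysub Q := by
    intro L
    induction L using List.reverseRecOn with
    | nil =>
        have h1 : cmk Q (FreeGroup.mk ([] : List (ℕ × Bool))) = base Q := rfl
        rw [h1, rep_base]
        simpa [← FreeGroup.one_eq_mk] using (Ysub Q).one_mem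
    | append_singleton L ℓ ih =>
        obtain ⟨b, d⟩ := ℓ
        have hsplit : FreeGroup.mk (L ++ [(b, d)]) = FreeGroup.mk L * FreeGroup.mk [(b, d)] :=
          mul_mk.symm
        have hc2 : cmk Q (FreeGroup.mk (L ++ [(b, d)]))
            = act Q (cmk Q (FreeGroup.mk L)) (b, d) := by
          rw [hsplit, act_cmk]
        set u := FreeGroup.mk L
        set c := cmk Q u with hc
        rw [hc2, hsplit]
        have key : (u * FreeGroup.mk [(b, d)]) * (rep Q (act Q c (b, d)))⁻¹
            = (u * (rep Q c)⁻¹) * (rep Q c * FreeGroup.mk [(b, d)] * (rep Q (act Q c (b, d)))⁻¹) := by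
          group
        rw [key]
        refine (Ysub Q).mul_mem ih ?_
        cases d
        · have h5 : rep Q c * FreeGroup.mk [(b, false)] * (rep Q (act Q c (b, false)))⁻¹
              = (yel Q (act Q c (b, false), b))⁻¹ := by
            have h6 : yel Q (act Q c (b, false), b)
                = rep Q (act Q c (b, false)) * of b * (rep Q c)⁻¹ := by
              rw [yel]
              congr 2
              rw [act_act_tt]
            rw [h6, mk_single_ff]
            group
          rw [h5]
          exact (Ysub Q).inv_mem (Subgroup.subset_closure ⟨_, rfl⟩)
        · have h5 : rep Q c * FreeGroup.mk [(b, true)] * (rep Q (act Q c (b, true)))⁻¹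
              = yel Q (c, b) := by
            rw [yel, mk_single_tt]
          rw [h5]
          exact Subgroup.subset_closure ⟨_, rfl⟩
  have := main w.toWord
  rwa [mk_toWord] at this

lemma mem_Ysub_of_mem_Q {p : F} (hp : p ∈ Q) : p ∈ Ysub Q := by
  have h := mul_rep_inv_mem_Ysub (Q := Q) p
  rw [cmk_eq_base_iff.mpr hp, rep_base] at h
  simpa using h

lemma yel_base_of_mem {i : ℕ} (hi : of i ∈ Q) : yel Q (base Q, i) = of i := by
  have h1 : act Q (base Q) (i, true) = base Q := by
    show act Q (cmk Q 1) (i, true) = base Q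
    rw [act_cmk, one_mul, mk_single_tt, cmk_eq_base_iff]
    exact hi
  show rep Q (base Q) * of i * (rep Q (act Q (base Q) (i, true)))⁻¹ = of i
  rw [h1, rep_base]
  group


/-! ### Homomorphism lemmas on `Ysub` and `Q` -/

lemma eq_on_Ysub {G : Type} [Group G] (f g : F →* G)
    (h : ∀ p, f (yel Q p) = g (yel Q p)) : ∀ w ∈ Ysub Q, f w = g w := by
  intro w hw
  induction hw using Subgroup.closure_induction with
  | mem w hwm => obtain ⟨p, rfl⟩ := hwm; exact h p
  | one => rw [_root_.map_one, _root_.map_one]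
  | mul a b _ _ ha hb => rw [_root_.map_mul, _root_.map_mul, ha, hb]
  | inv a _ ha => rw [_root_.map_inv, _root_.map_inv, ha]

lemma kap_eq_hom_on_Q {G : Type} [Group G] (x : C Q × ℕ → G) (f : F →* G)
    {S : Set F} (hgen : Q = Subgroup.closure S) (hf : ∀ u ∈ S, kap x u = f u) :
    ∀ w ∈ Q, kap x w = f w := by
  intro w hw
  rw [hgen] at hw
  induction hw using Subgroup.closure_induction with
  | mem u hu => exact hf u hu
  | one => rw [kap_one, _root_.map_one]
  | mul a b ha hb ha' hb' =>
      rw [← hgen] at ha hb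
      rw [kap_mul_of_mem x ha, _root_.map_mul, ha', hb']
  | inv a ha ha' =>
      rw [← hgen] at ha
      rw [kap_inv_of_mem x ha, _root_.map_inv, ha']

/-- `kap` of a Schreier generator is the label of its distinguished edge. -/
lemma kap_yel {G : Type} [Group G] (x : C Q × ℕ → G)
    (hx : ∀ p, yel Q p = 1 → x p = 1) (p : C Q × ℕ) :
    kap x (yel Q p) = x p := by
  obtain ⟨c, b⟩ := p
  set c₂ := act Q c (b, true) with hc₂
  have hyel : yel Q (c, b) = rep Q c * of b * (rep Q c₂)⁻¹ := rfl
  have hmkL : FreeGroup.mk ((rep Q c).toWord ++ ((b, true) :: invRev (rep Q c₂).toWord))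
      = yel Q (c, b) := by
    have h0 : ((b, true) :: invRev (rep Q c₂).toWord)
        = [(b, true)] ++ invRev (rep Q c₂).toWord := rfl
    rw [h0, ← List.append_assoc, ← mul_mk, ← mul_mk, mk_toWord, ← inv_mk, mk_toWord,
      mk_single_tt, hyel]
  rw [← trav_toWord_eq_kap x _ hmkL, trav_append, rep_trav x hx c, one_mul, foldl_act_base,
    mk_toWord, rep_cmk, trav_cons_tt]
  have h3 : trav Q x (act Q c (b, true)) (invRev (rep Q c₂).toWord) = 1 := by
    have h4 : List.foldl (act Q) (base Q) (rep Q c₂).toWord = c₂ := by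
      rw [foldl_act_base, mk_toWord, rep_cmk]
    have h5 := trav_invRev x (base Q) (rep Q c₂).toWord
    rw [h4] at h5
    rw [← hc₂, h5, rep_trav x hx c₂, inv_one]
  rw [h3, mul_one]

/-! ### The subgroup attached to an automorphism and a finite window -/

section Main

variable {G : Type} [Group G] [Fintype G]
variable (ψ : F ≃* F) (T : Finset ℕ)

/-- The subgroup generated by the generators indexed by `T`. -/
def FT : Subgroup F := Subgroup.closure (FreeGroup.of '' (T : Set ℕ))

/-- The preimage of `FT` under `ψ`. -/
def Qs : Subgroup F := (FT T).comap ψ.toMonoidHom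

lemma q_mem (t : ℕ) (ht : t ∈ T) : ψ.symm (of t) ∈ Qs ψ T := by
  show ψ (ψ.symm (of t)) ∈ FT T
  rw [MulEquiv.apply_symm_apply]
  exact Subgroup.subset_closure ⟨t, ht, rfl⟩

lemma Qs_eq_closure : Qs ψ T = Subgroup.closure ((fun t => ψ.symm (of t)) '' (T : Set ℕ)) := by
  have h1 : Qs ψ T = Subgroup.map ψ.symm.toMonoidHom (FT T) :=
    Subgroup.comap_equiv_eq_map_symm' ψ (FT T)
  rw [h1, FT, MonoidHom.map_closure, Set.image_image]
  rfl

variable {T} in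
/-- Extension of a tuple on `T` by `1`. -/
noncomputable def tx (x : ↥T → G) : ℕ → G :=
  fun n => if h : n ∈ T then x ⟨n, h⟩ else 1

variable {T} in
/-- The homomorphism on `F` induced by a tuple on `T` (twisted by `ψ`). -/
noncomputable def ev (x : ↥T → G) : F →* G :=
  (FreeGroup.lift (tx x)).comp ψ.toMonoidHom

lemma ev_q (x : ↥T → G) (t : ℕ) (ht : t ∈ T) :
    ev ψ x (ψ.symm (of t)) = x ⟨t, ht⟩ := by
  show (FreeGroup.lift (tx x)) (ψ (ψ.symm (of t))) = _
  rw [MulEquiv.apply_symm_apply, FreeGroup.lift_apply_of, tx, dif_pos ht]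

/-- Surjectivity: every prescribed tuple of values on a finite family of nontrivial
Schreier generators is realized by some `ev x`. -/
lemma surj_tuple (M : Finset (C (Qs ψ T) × ℕ)) (hM : ∀ p ∈ M, yel (Qs ψ T) p ≠ 1)
    (τ : C (Qs ψ T) × ℕ → G) :
    ∃ x : ↥T → G, ∀ p ∈ M, ev ψ x (yel (Qs ψ T) p) = τ p := by
  classical
  have hlab : ∀ p, yel (Qs ψ T) p = 1 → (fun p => if p ∈ M then τ p else 1) p = 1 := by
    intro p hp
    exact if_neg (fun hmem => hM p hmem hp)
  set xx : C (Qs ψ T) × ℕ → G := fun p => if p ∈ M then τ p else 1 with hxxdef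
  refine ⟨fun t => kap xx (ψ.symm (of (t : ℕ))), ?_⟩
  set x : ↥T → G := fun t => kap xx (ψ.symm (of (t : ℕ))) with hxdef
  have hagree : ∀ w ∈ Qs ψ T, kap xx w = ev ψ x w := by
    refine kap_eq_hom_on_Q xx (ev ψ x) (Qs_eq_closure ψ T) ?_
    rintro u ⟨t, ht, rfl⟩
    rw [ev_q ψ T x t ht, hxdef]
  intro p hp
  rw [← hagree _ (yel_mem_Q p), kap_yel xx hlab p]
  exact if_pos hp

lemma card_pow_le (M : Finset (C (Qs ψ T) × ℕ)) (hM : ∀ p ∈ M, yel (Qs ψ T) p ≠ 1) :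
    Fintype.card G ^ M.card ≤ Fintype.card G ^ T.card := by
  classical
  have hsurj : Function.Surjective
      (fun (x : ↥T → G) (e : ↥M) => ev ψ x (yel (Qs ψ T) e.1)) := by
    intro τ
    obtain ⟨x, hxτ⟩ := surj_tuple ψ T M hM
      (fun p => if h : p ∈ M then τ ⟨p, h⟩ else 1)
    refine ⟨x, funext fun e => ?_⟩
    show ev ψ x (yel (Qs ψ T) e.1) = τ e
    rw [hxτ e.1 e.2, dif_pos e.2]
  have hle := Fintype.card_le_of_surjective _ hsurj
  rwa [Fintype.card_fun, Fintype.card_fun, Fintype.card_coe, Fintype.card_coe] at hle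


/-- The set of nontrivial Schreier generators. -/
def NT : Set (C (Qs ψ T) × ℕ) := {p | yel (Qs ψ T) p ≠ 1}

lemma NT_finite : (NT ψ T).Finite := by
  by_contra hinf
  obtain ⟨M, hMsub, hMcard⟩ :=
    Set.Infinite.exists_subset_card_eq hinf (T.card + 1)
  have hle := card_pow_le (G := Multiplicative (ZMod 2)) ψ T M (fun p hp => hMsub hp)
  rw [hMcard] at hle
  have hc : Fintype.card (Multiplicative (ZMod 2)) = 2 := rfl
  rw [hc] at hle
  have hlt : (2 : ℕ) ^ T.card < 2 ^ (T.card + 1) :=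
    Nat.pow_lt_pow_right (by norm_num) (Nat.lt_succ_self _)
  omega

/-- The nontrivial Schreier generators, as a finset. -/
noncomputable def NTf : Finset (C (Qs ψ T) × ℕ) := (NT_finite ψ T).toFinset

lemma mem_NTf' {p : C (Qs ψ T) × ℕ} : p ∈ NTf ψ T ↔ yel (Qs ψ T) p ≠ 1 := by
  rw [NTf, Set.Finite.mem_toFinset]
  rfl

/-- Evaluation of the nontrivial Schreier generators. -/
noncomputable def theta (x : ↥T → G) : ↥(NTf ψ T) → G :=
  fun e => ev ψ x (yel (Qs ψ T) e.1)

lemma theta_injective : Function.Injective (theta (G := G) ψ T) := by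
  classical
  intro x x' h
  have hall : ∀ p, ev ψ x (yel (Qs ψ T) p) = ev ψ x' (yel (Qs ψ T) p) := by
    intro p
    by_cases hp : yel (Qs ψ T) p = 1
    · rw [hp, _root_.map_one, _root_.map_one]
    · exact congrFun h ⟨p, (mem_NTf' ψ T).mpr hp⟩
  have hY := eq_on_Ysub (ev ψ x) (ev ψ x') hall
  funext t
  have hq : ψ.symm (of (t : ℕ)) ∈ Ysub (Qs ψ T) :=
    mem_Ysub_of_mem_Q (q_mem ψ T t t.2)
  have := hY _ hq
  rw [ev_q ψ T x t t.2, ev_q ψ T x' t t.2] at this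
  simpa using this

lemma theta_surjective : Function.Surjective (theta (G := G) ψ T) := by
  classical
  intro τ
  obtain ⟨x, hx⟩ := surj_tuple ψ T (NTf ψ T)
    (fun p hp => (mem_NTf' ψ T).mp hp)
    (fun p => if h : p ∈ NTf ψ T then τ ⟨p, h⟩ else 1)
  refine ⟨x, funext fun e => ?_⟩
  show ev ψ x (yel (Qs ψ T) e.1) = τ e
  rw [hx e.1 e.2, dif_pos e.2]

lemma NTf_card : (NTf ψ T).card = T.card := by
  classical
  have hbij : Function.Bijective (theta (G := Multiplicative (ZMod 2)) ψ T) :=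
    ⟨theta_injective ψ T, theta_surjective ψ T⟩
  have := Fintype.card_of_bijective hbij
  rw [Fintype.card_fun, Fintype.card_fun, Fintype.card_coe, Fintype.card_coe] at this
  have hc : Fintype.card (Multiplicative (ZMod 2)) = 2 := rfl
  rw [hc] at this
  exact (Nat.pow_right_injective (le_refl 2) this).symm

/-- Counting functions with finitely many prescribed coordinates. -/
lemma card_constrained {α : Type} [Fintype α] {H : Type} [Fintype H]
    (J : Finset α) (v : ↥J → H) :
    Nat.card {f : α → H // ∀ j : ↥J, f ↑j = v j}
      = Fintype.card H ^ (Fintype.card α - J.card) := by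
  classical
  have e : {f : α → H // ∀ j : ↥J, f ↑j = v j} ≃ (↥(Jᶜ) → H) :=
    { toFun := fun f g => f.1 ↑g
      invFun := fun g =>
        ⟨fun a => if h : a ∈ J then v ⟨a, h⟩ else g ⟨a, Finset.mem_compl.mpr h⟩,
          fun j => by
            cases j with
            | mk a ha => exact dif_pos ha⟩
      left_inv := by
        intro f
        apply Subtype.ext
        funext a
        by_cases h : a ∈ J
        · show (if h' : a ∈ J then v ⟨a, h'⟩ else _) = f.1 a
          rw [dif_pos h, f.2 ⟨a, h⟩]
        · show (if h' : a ∈ J then v ⟨a, h'⟩ else f.1 _) = f.1 a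
          rw [dif_neg h]
      right_inv := by
        intro g
        funext a
        show (if h' : ↑a ∈ J then v ⟨↑a, h'⟩ else g _) = g a
        rw [dif_neg (Finset.mem_compl.mp a.2)] }
  rw [Nat.card_congr e, Nat.card_eq_fintype_card, Fintype.card_fun, Fintype.card_coe,
    Finset.card_compl]

lemma of_mem_Qs {i : ℕ} (hi : ψ (of i) ∈ FT T) : of i ∈ Qs ψ T := hi

lemma yel_base_i {i : ℕ} (hi : ψ (of i) ∈ FT T) :
    yel (Qs ψ T) (base (Qs ψ T), i) = of i :=
  yel_base_of_mem (of_mem_Qs ψ T hi)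

lemma base_i_mem_NTf {i : ℕ} (hi : ψ (of i) ∈ FT T) :
    (base (Qs ψ T), i) ∈ NTf ψ T := by
  rw [mem_NTf', yel_base_i ψ T hi]
  exact of_ne_one i

/-- The core counting result: the number of tuples on `T` whose induced homomorphism
takes the prescribed values `σ` on `ψ(of i)`, `i ∈ s`, is `|G| ^ (|T| - |s|)`. -/
theorem core_count (s : Finset ℕ) (hsT : s ⊆ T) (hψs : ∀ i ∈ s, ψ (of i) ∈ FT T)
    (σ : ℕ → G) :
    Nat.card {x : ↥T → G // ∀ i : ↥s, ev ψ x (of (i : ℕ)) = σ i}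
      = Fintype.card G ^ (T.card - s.card) := by
  classical
  -- index of the base self-loop generators
  have hmem : ∀ i : ↥s, (base (Qs ψ T), (i : ℕ)) ∈ NTf ψ T :=
    fun i => base_i_mem_NTf ψ T (hψs i i.2)
  set eidx : ↥s → ↥(NTf ψ T) := fun i => ⟨(base (Qs ψ T), (i : ℕ)), hmem i⟩ with heidx
  have heinj : Function.Injective eidx := by
    intro i j hij
    apply Subtype.ext
    exact congrArg (fun e : ↥(NTf ψ T) => e.1.2) hij
  set J : Finset ↥(NTf ψ T) := Finset.image eidx Finset.univ with hJ
  have hJcard : J.card = s.card := by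
    rw [hJ, Finset.card_image_of_injective _ heinj, Finset.card_univ, Fintype.card_coe]
  set v : ↥J → G := fun j => σ ((j : ↥(NTf ψ T)) : C (Qs ψ T) × ℕ).2 with hv
  -- the theta equivalence
  have hbij : Function.Bijective (theta (G := G) ψ T) :=
    ⟨theta_injective ψ T, theta_surjective ψ T⟩
  set e := Equiv.ofBijective _ hbij with he
  -- transfer the constraint
  have hiff : ∀ x : ↥T → G,
      (∀ i : ↥s, ev ψ x (of (i : ℕ)) = σ i) ↔ (∀ j : ↥J, (e x) ↑j = v j) := by
    intro x
    constructor
    · rintro hx ⟨j, hjJ⟩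
      obtain ⟨i, -, rfl⟩ := Finset.mem_image.mp hjJ
      show ev ψ x (yel (Qs ψ T) (base (Qs ψ T), (i : ℕ))) = σ (i : ℕ)
      rw [yel_base_i ψ T (hψs i i.2)]
      exact hx i
    · intro hτ i
      have hji : eidx i ∈ J := Finset.mem_image_of_mem _ (Finset.mem_univ i)
      have h3 : ev ψ x (yel (Qs ψ T) (base (Qs ψ T), (i : ℕ))) = σ (i : ℕ) :=
        hτ ⟨eidx i, hji⟩
      rwa [yel_base_i ψ T (hψs i i.2)] at h3
  have hcongr : Nat.card {x : ↥T → G // ∀ i : ↥s, ev ψ x (of (i : ℕ)) = σ i}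
      = Nat.card {τ : ↥(NTf ψ T) → G // ∀ j : ↥J, τ ↑j = v j} :=
    Nat.card_congr (e.subtypeEquiv hiff)
  rw [hcongr, card_constrained J v, Fintype.card_coe, NTf_card, hJcard]

end Main

/-! ### Measure-theoretic part -/

section Meas

variable (G : Type) [Group G] [Fintype G]

/-- The collection of cylinder sets. -/
def cylSets : Set (Set (F →* G)) :=
  {S | ∃ (s : Finset ℕ) (σ : ℕ → G), S = {h : F →* G | ∀ i ∈ s, h (of i) = σ i}}

lemma meas_eval (w : F) (A : Set G) :
    MeasurableSet {h : F →* G | h w ∈ A} := by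
  letI : MeasurableSpace G := ⊤
  refine MeasurableSpace.measurableSet_comap.mpr ⟨(fun f : F → G => f w) ⁻¹' A, ?_, rfl⟩
  exact measurable_pi_apply w MeasurableSpace.measurableSet_top

lemma meas_cyl (s : Finset ℕ) (σ : ℕ → G) :
    MeasurableSet {h : F →* G | ∀ i ∈ s, h (of i) = σ i} := by
  have heq : {h : F →* G | ∀ i ∈ s, h (of i) = σ i}
      = ⋂ i ∈ s, {h : F →* G | h (of i) ∈ ({σ i} : Set G)} := by
    ext h
    simp
  rw [heq]
  exact MeasurableSet.biInter s.countable_toSet (fun i _ => meas_eval G (of i) {σ i})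

variable {G}

/-- On the subgroup generated by `T`-indexed generators, a homomorphism agrees with
the lift of its restriction to `T`. -/
lemma hom_eq_lift_on_FT (h : F →* G) (T : Finset ℕ) {w : F} (hw : w ∈ FT T) :
    h w = FreeGroup.lift (tx (fun t : ↥T => h (of (t : ℕ)))) w := by
  induction hw using Subgroup.closure_induction with
  | mem u hu =>
      obtain ⟨t, ht, rfl⟩ := hu
      rw [FreeGroup.lift_apply_of, tx, dif_pos (Finset.mem_coe.mp ht)]
  | one => rw [_root_.map_one, _root_.map_one]
  | mul a b _ _ ha hb => rw [_root_.map_mul, _root_.map_mul, ha, hb]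
  | inv a _ ha => rw [_root_.map_inv, _root_.map_inv, ha]

/-- Membership in `FT T` from letter support. -/
lemma mem_FT_of_supp (T : Finset ℕ) (w : F)
    (hs : ∀ n ∈ w.toWord.map Prod.fst, n ∈ T) : w ∈ FT T := by
  have main : ∀ L : List (ℕ × Bool), (∀ n ∈ L.map Prod.fst, n ∈ T) →
      FreeGroup.mk L ∈ FT T := by
    intro L
    induction L with
    | nil =>
        intro _
        have : FreeGroup.mk ([] : List (ℕ × Bool)) = 1 := rfl
        rw [this]
        exact (FT T).one_mem
    | cons ℓ L ih =>
        intro hL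
        obtain ⟨b, d⟩ := ℓ
        have hsplit : FreeGroup.mk ((b, d) :: L) = FreeGroup.mk [(b, d)] * FreeGroup.mk L := by
          rw [mul_mk]
          rfl
        rw [hsplit]
        have hb : b ∈ T := hL b (by simp)
        have hof : of b ∈ FT T := Subgroup.subset_closure ⟨b, hb, rfl⟩
        have h1 : FreeGroup.mk [(b, d)] ∈ FT T := by
          cases d
          · rw [mk_single_ff]
            exact (FT T).inv_mem hof
          · rw [mk_single_tt]
            exact hof
        exact (FT T).mul_mem h1 (ih (fun n hn => hL n (by simp [hn])))
  have := main w.toWord (by simpa using hs)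
  rwa [mk_toWord] at this

variable (G) in
/-- Single-evaluation events lie in the σ-algebra generated by the cylinder sets. -/
lemma eval_event_mem_generateFrom (w : F) (g : G) :
    MeasurableSet[MeasurableSpace.generateFrom (cylSets G)] {h : F →* G | h w = g} := by
  classical
  set T : Finset ℕ := (w.toWord.map Prod.fst).toFinset with hT
  have hwT : w ∈ FT T := mem_FT_of_supp T w (fun n hn => List.mem_toFinset.mpr hn)
  have heq : {h : F →* G | h w = g}
      = ⋃ x ∈ Finset.univ.filter
          (fun x : ↥T → G => FreeGroup.lift (tx x) w = g),
          {h : F →* G | ∀ t ∈ T, h (of t) = tx x t} := by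
    ext h
    simp only [Set.mem_setOf_eq, Set.mem_iUnion, Finset.mem_filter, Finset.mem_univ, true_and]
    constructor
    · intro hwg
      refine ⟨fun t => h (of (t : ℕ)), ?_, ?_⟩
      · rw [← hom_eq_lift_on_FT h T hwT]
        exact hwg
      · intro t ht
        rw [tx, dif_pos ht]
    · rintro ⟨x, hxw, hx⟩
      have hxh : (fun t : ↥T => h (of (t : ℕ))) = x := by
        funext t
        have := hx (t : ℕ) t.2
        rw [this, tx, dif_pos t.2]
      rw [hom_eq_lift_on_FT h T hwT, hxh, hxw]
  rw [heq]
  refine MeasurableSet.biUnion (Finset.countable_toSet _) (fun x _ => ?_)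
  exact MeasurableSpace.measurableSet_generateFrom ⟨T, tx x, rfl⟩

variable (G) in
lemma homMS_eq_generateFrom :
    (homMS G : MeasurableSpace (F →* G)) = MeasurableSpace.generateFrom (cylSets G) := by
  letI : MeasurableSpace G := ⊤
  apply le_antisymm
  · -- homMS ≤ generated: the coercion map is measurable for the generated σ-algebra
    intro S hS
    obtain ⟨S', hS', rfl⟩ := MeasurableSpace.measurableSet_comap.mp hS
    have hι : @Measurable _ _ (MeasurableSpace.generateFrom (cylSets G)) MeasurableSpace.pi
        (fun h : F →* G => (h : F → G)) := by
      refine @measurable_pi_lambda (F →* G) F (fun _ => G)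
        (MeasurableSpace.generateFrom (cylSets G)) (fun _ => ⊤) _ (fun w => ?_)
      intro A _
      have : (fun h : F →* G => h w) ⁻¹' A = ⋃ g ∈ A ∩ Set.univ, {h : F →* G | h w = g} := by
        ext h
        simp
      rw [this]
      refine MeasurableSet.biUnion (Set.Countable.mono Set.inter_subset_right (Set.countable_univ))
        (fun g _ => eval_event_mem_generateFrom G w g)
    exact hι hS'
  · -- generated ≤ homMS
    apply MeasurableSpace.generateFrom_le
    rintro S ⟨s, σ, rfl⟩
    exact meas_cyl G s σ

variable (G) in
lemma meas_comp (χ : F →* F) : Measurable (fun h : F →* G => h.comp χ) := by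
  letI : MeasurableSpace G := ⊤
  intro S hS
  obtain ⟨S', hS', rfl⟩ := MeasurableSpace.measurableSet_comap.mp hS
  have hpre : Measurable (fun f : F → G => (fun w => f (χ w))) :=
    measurable_pi_lambda _ (fun w => measurable_pi_apply (χ w))
  have hrw : (fun h : F →* G => h.comp χ) ⁻¹' ((fun f : F →* G => (f : F → G)) ⁻¹' S')
      = (fun h : F →* G => (h : F → G)) ⁻¹' ((fun f : F → G => fun w => f (χ w)) ⁻¹' S') := rfl
  rw [hrw]
  exact (hpre.comp (comap_measurable _)) hS'

/-- The measure of the twisted cylinder event. -/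
theorem measure_psi_event (μ : Measure (F →* G)) (ψ : F ≃* F)
    (hcyl : ∀ (s : Finset ℕ) (σ : ℕ → G),
      μ {h : F →* G | ∀ i ∈ s, h (FreeGroup.of i) = σ i}
        = ((Fintype.card G : ENNReal))⁻¹ ^ s.card)
    (s : Finset ℕ) (σ : ℕ → G) :
    μ {h : F →* G | ∀ i ∈ s, h (ψ (of i)) = σ i}
      = ((Fintype.card G : ENNReal))⁻¹ ^ s.card := by
  classical
  set T : Finset ℕ := s ∪ s.biUnion (fun i => ((ψ (of i)).toWord.map Prod.fst).toFinset)
    with hT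
  have hsT : s ⊆ T := Finset.subset_union_left
  have hψs : ∀ i ∈ s, ψ (of i) ∈ FT T := by
    intro i hi
    apply mem_FT_of_supp
    intro n hn
    apply Finset.mem_union_right
    exact Finset.mem_biUnion.mpr ⟨i, hi, List.mem_toFinset.mpr hn⟩
  set A : Finset (↥T → G) :=
    Finset.univ.filter (fun x : ↥T → G => ∀ i ∈ s, FreeGroup.lift (tx x) (ψ (of i)) = σ i)
    with hA
  have heq : {h : F →* G | ∀ i ∈ s, h (ψ (of i)) = σ i}
      = ⋃ x ∈ A, {h : F →* G | ∀ t ∈ T, h (of t) = tx x t} := by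
    ext h
    simp only [Set.mem_setOf_eq, Set.mem_iUnion, hA, Finset.mem_filter, Finset.mem_univ,
      true_and]
    constructor
    · intro hh
      refine ⟨fun t => h (of (t : ℕ)), fun i hi => ?_, fun t ht => ?_⟩
      · rw [← hom_eq_lift_on_FT h T (hψs i hi)]
        exact hh i hi
      · rw [tx, dif_pos ht]
    · rintro ⟨x, hxA, hx⟩ i hi
      have hxh : (fun t : ↥T => h (of (t : ℕ))) = x := by
        funext t
        have := hx (t : ℕ) t.2
        rw [this, tx, dif_pos t.2]
      rw [hom_eq_lift_on_FT h T (hψs i hi), hxh]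
      exact hxA i hi
  have hdisj : (A : Set (↥T → G)).PairwiseDisjoint
      (fun x => {h : F →* G | ∀ t ∈ T, h (of t) = tx x t}) := by
    intro x _ x' _ hne
    apply Set.disjoint_left.mpr
    intro h hx hx'
    apply hne
    funext t
    have h1 := hx (t : ℕ) t.2
    have h2 := hx' (t : ℕ) t.2
    rw [h1] at h2
    rw [tx, tx, dif_pos t.2, dif_pos t.2] at h2
    exact h2
  rw [heq, measure_biUnion_finset hdisj
    (fun x _ => meas_cyl G T (tx x))]
  have hval : ∀ x ∈ A, μ {h : F →* G | ∀ t ∈ T, h (of t) = tx x t}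
      = ((Fintype.card G : ENNReal))⁻¹ ^ T.card := fun x _ => hcyl T (tx x)
  rw [Finset.sum_congr rfl hval, Finset.sum_const, nsmul_eq_mul]
  -- now compute the cardinality of A
  have hAcard : A.card = Fintype.card G ^ (T.card - s.card) := by
    have h1 : A.card = Fintype.card
        {x : ↥T → G // ∀ i ∈ s, FreeGroup.lift (tx x) (ψ (of i)) = σ i} :=
      (Fintype.card_subtype _).symm
    have h2 : Fintype.card {x : ↥T → G // ∀ i ∈ s, FreeGroup.lift (tx x) (ψ (of i)) = σ i}
        = Nat.card {x : ↥T → G // ∀ i : ↥s, ev ψ x (of (i : ℕ)) = σ i} := by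
      rw [Nat.card_eq_fintype_card]
      apply Fintype.card_congr
      apply Equiv.subtypeEquivRight
      intro x
      constructor
      · intro hx i
        exact hx (i : ℕ) i.2
      · intro hx i hi
        exact hx ⟨i, hi⟩
    rw [h1, h2, core_count ψ T s hsT hψs σ]
  rw [hAcard, Nat.cast_pow]
  -- ENNReal arithmetic
  have hc0 : (Fintype.card G : ENNReal) ≠ 0 := by
    simp [Fintype.card_ne_zero]
  have hctop : (Fintype.card G : ENNReal) ≠ ⊤ := ENNReal.natCast_ne_top _
  obtain ⟨k, hk⟩ : ∃ k, T.card = k + s.card :=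
    ⟨T.card - s.card, (Nat.sub_add_cancel (Finset.card_le_card hsT)).symm⟩
  have hk2 : T.card - s.card = k := by omega
  rw [hk2, hk, pow_add, ← mul_assoc, ← mul_pow, ENNReal.mul_inv_cancel hc0 hctop, one_pow,
    one_mul]

variable (G) in
lemma cylSets_pi : IsPiSystem (cylSets G) := by
  rintro S ⟨s, σ, rfl⟩ S' ⟨s', σ', rfl⟩ hne
  classical
  obtain ⟨h₀, hh₀⟩ := hne
  obtain ⟨c1, c2⟩ := hh₀
  refine ⟨s ∪ s', fun n => if n ∈ s then σ n else σ' n, ?_⟩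
  ext h
  simp only [Set.mem_inter_iff, Set.mem_setOf_eq, Finset.mem_union]
  constructor
  · rintro ⟨h1, h2⟩ i hi
    by_cases hs : i ∈ s
    · rw [if_pos hs]
      exact h1 i hs
    · rw [if_neg hs]
      exact h2 i (hi.resolve_left hs)
  · intro hh
    constructor
    · intro i hi
      have := hh i (Or.inl hi)
      rwa [if_pos hi] at this
    · intro i hi
      have hthis := hh i (Or.inr hi)
      by_cases hs : i ∈ s
      · rw [if_pos hs] at hthis
        have e1 : σ i = σ' i := by
          rw [← c1 i hs, c2 i hi]
        rw [hthis, e1]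
      · rwa [if_neg hs] at hthis

end Meas

end SchreierDev

/-- If `μ` is the Borel probability measure on `Hom(FreeGroup ℕ, G)` (G finite) giving each
cylinder set `Cyl(e₁,…,e_k; σ₁,…,σ_k)` measure `1/|G|^k`, then for every automorphism `φ`
of the free group, the map `h ↦ h ∘ φ⁻¹` preserves `μ`. -/
theorem stmt1 (G : Type) [Group G] [Fintype G]
    (μ : Measure (FreeGroup ℕ →* G)) [IsProbabilityMeasure μ]
    (hcyl : ∀ (s : Finset ℕ) (σ : ℕ → G),
      μ {h : FreeGroup ℕ →* G | ∀ i ∈ s, h (FreeGroup.of i) = σ i}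
        = ((Fintype.card G : ENNReal))⁻¹ ^ s.card)
    (φ : FreeGroup ℕ ≃* FreeGroup ℕ) :
    Measure.map (fun h : FreeGroup ℕ →* G => h.comp φ.symm.toMonoidHom) μ = μ := by
  have hmeas : Measurable (fun h : FreeGroup ℕ →* G => h.comp φ.symm.toMonoidHom) :=
    SchreierDev.meas_comp G φ.symm.toMonoidHom
  haveI : IsProbabilityMeasure
      (Measure.map (fun h : FreeGroup ℕ →* G => h.comp φ.symm.toMonoidHom) μ) :=
    Measure.isProbabilityMeasure_map hmeas.aemeasurable
  refine MeasureTheory.ext_of_generate_finite (SchreierDev.cylSets G)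
    (SchreierDev.homMS_eq_generateFrom G) (SchreierDev.cylSets_pi G) ?_ ?_
  · rintro S ⟨s, σ, rfl⟩
    rw [Measure.map_apply hmeas (SchreierDev.meas_cyl G s σ), hcyl s σ]
    have hpre : (fun h : FreeGroup ℕ →* G => h.comp φ.symm.toMonoidHom) ⁻¹'
        {h : FreeGroup ℕ →* G | ∀ i ∈ s, h (FreeGroup.of i) = σ i}
        = {h : FreeGroup ℕ →* G | ∀ i ∈ s, h (φ.symm (FreeGroup.of i)) = σ i} := rfl
    rw [hpre, SchreierDev.measure_psi_event μ φ.symm hcyl s σ]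
  · rw [measure_univ, measure_univ]
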